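/- Let F and Q be disjoint subsets of ℚ with F infinite and F having no isolated points in Q ∪ F (with the subspace topology from ℝ). Then there exists a bijection f : Q ∪ F → Q ∪ F such that f is the identity on Q, f(x) ≠ x and f(f(x)) = x for all x ∈ F, and the set of continuity points of f (as a map between subspaces of ℝ) is exactly Q. -/

import Mathlib

namespace Stmt0Proof
open Set Filter Metric Function Topology
attribute [local instance] Classical.propDecidable

noncomputable section

def used (L : List (ℕ × ℕ)) (k : ℕ) : Prop := ∃ p ∈ L, p.1 = k ∨ p.2 = k

lemma used_finite (L : List (ℕ × ℕ)) : {k | used L k}.Finite := by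
  induction L with
  | nil => simp [used]
  | cons p L ih =>
    have hsub : {k | used (p :: L) k} ⊆ insert p.1 (insert p.2 {k | used L k}) := by
      rintro k ⟨q, hq, h⟩
      rcases List.mem_cons.mp hq with rfl | hq
      · rcases h with h | h
        · exact Or.inl h.symm
        · exact Or.inr (Or.inl h.symm)
      · exact Or.inr (Or.inr ⟨q, hq, h⟩)
    exact ((ih.insert p.2).insert p.1).subset hsub

lemma exists_unused (L : List (ℕ × ℕ)) : ∃ k, ¬ used L k :=
  (used_finite L).infinite_compl.nonempty

def chooser (L : List (ℕ × ℕ)) : ℕ := Nat.find (exists_unused L)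

lemma chooser_unused (L : List (ℕ × ℕ)) : ¬ used L (chooser L) := Nat.find_spec (exists_unused L)

lemma chooser_min (L : List (ℕ × ℕ)) {k : ℕ} (h : ¬ used L k) : chooser L ≤ k :=
  Nat.find_min' _ h

variable (y t : ℕ → ℝ)

def Tset (j : ℕ) : Set ℝ := t '' Set.Iic j

def uD (j : ℕ) (x : ℝ) : ℝ := infDist x (Tset t j)

def sD (j : ℕ) (x : ℝ) : ℝ := min (uD t j x) j

def radius (j : ℕ) (L : List (ℕ × ℕ)) : ℝ := (1/2 : ℝ)^j + 5 * uD t j (y (chooser L))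

def USet (L : List (ℕ × ℕ)) : Set ℕ := {m | ¬ used L m ∧ m ≠ chooser L}

def BallSet (j : ℕ) (L : List (ℕ × ℕ)) : Set ℕ :=
  {m | m ∈ USet L ∧ dist (y m) (y (chooser L)) ≤ radius y t j L}

def gam (j : ℕ) (L : List (ℕ × ℕ)) : ℝ := sSup ((fun m => sD t j (y m)) '' USet L)

def bet (j : ℕ) (L : List (ℕ × ℕ)) : ℝ := sSup ((fun m => sD t j (y m)) '' BallSet y t j L)

def OC (j : ℕ) (L : List (ℕ × ℕ)) : Prop :=
  1 ≤ uD t j (y (chooser L)) ∧ ∀ m ∈ BallSet y t j L, sD t j (y m) ≤ uD t j (y (chooser L)) / 100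

def PartnerP (j : ℕ) (L : List (ℕ × ℕ)) (m : ℕ) : Prop :=
  m ∈ USet L ∧
  (if OC y t j L then gam y t j L / 2 ≤ sD t j (y m)
   else ((BallSet y t j L).Nonempty → m ∈ BallSet y t j L ∧ bet y t j L / 2 ≤ sD t j (y m)))

lemma USet_infinite (L : List (ℕ × ℕ)) : (USet L).Infinite := by
  have : (USet L) = ({k | used L k} ∪ {chooser L})ᶜ := by
    ext k; simp [USet, mem_compl_iff, not_or]; tauto
  rw [this]
  exact ((used_finite L).union (finite_singleton _)).infinite_compl

lemma sD_nonneg (j : ℕ) (x : ℝ) : 0 ≤ sD t j x :=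
  le_min infDist_nonneg (Nat.cast_nonneg j)

lemma sD_le (j : ℕ) (x : ℝ) : sD t j x ≤ j := min_le_right _ _

lemma bddAbove_sD (j : ℕ) (A : Set ℕ) : BddAbove ((fun m => sD t j (y m)) '' A) := by
  refine ⟨j, ?_⟩
  rintro v ⟨m, _, rfl⟩
  exact sD_le t j (y m)

lemma exists_partner (j : ℕ) (L : List (ℕ × ℕ)) : ∃ m, PartnerP y t j L m := by
  by_cases hoc : OC y t j L
  · obtain ⟨m₀, hm₀⟩ := (USet_infinite L).nonempty
    by_cases hg : 0 < gam y t j L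
    · obtain ⟨v, hvA, hv⟩ := exists_lt_of_lt_csSup ⟨_, mem_image_of_mem _ hm₀⟩ (half_lt_self hg)
      obtain ⟨m, hm, rfl⟩ := hvA
      exact ⟨m, hm, by rw [if_pos hoc]; unfold gam; linarith⟩
    · refine ⟨m₀, hm₀, ?_⟩
      rw [if_pos hoc]
      have := sD_nonneg t j (y m₀)
      push_neg at hg
      linarith
  · by_cases hb : (BallSet y t j L).Nonempty
    · obtain ⟨m₀, hm₀⟩ := hb
      by_cases hg : 0 < bet y t j L
      · obtain ⟨v, hvA, hv⟩ := exists_lt_of_lt_csSup ⟨_, mem_image_of_mem _ hm₀⟩ (half_lt_self hg)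
        obtain ⟨m, hm, rfl⟩ := hvA
        exact ⟨m, hm.1, by rw [if_neg hoc]; exact fun _ => ⟨hm, by unfold bet; linarith⟩⟩
      · refine ⟨m₀, hm₀.1, ?_⟩
        rw [if_neg hoc]
        refine fun _ => ⟨hm₀, ?_⟩
        have := sD_nonneg t j (y m₀)
        push_neg at hg
        linarith
    · obtain ⟨m₀, hm₀⟩ := (USet_infinite L).nonempty
      exact ⟨m₀, hm₀, by rw [if_neg hoc]; exact fun h => absurd h hb⟩

def partner (j : ℕ) (L : List (ℕ × ℕ)) : ℕ := Classical.choose (exists_partner y t j L)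

lemma partner_spec (j : ℕ) (L : List (ℕ × ℕ)) : PartnerP y t j L (partner y t j L) :=
  Classical.choose_spec (exists_partner y t j L)

def stepP (j : ℕ) (L : List (ℕ × ℕ)) : ℕ × ℕ := (chooser L, partner y t j L)

def steps : ℕ → List (ℕ × ℕ)
  | 0 => []
  | (j+1) => steps j ++ [stepP y t j (steps j)]

lemma mem_steps_iff {p : ℕ × ℕ} {n : ℕ} :
    p ∈ steps y t n ↔ ∃ j < n, p = stepP y t j (steps y t j) := by
  induction n with
  | zero => simp [steps]
  | succ n ih =>
    simp only [steps, List.mem_append, List.mem_singleton, ih, Nat.lt_succ_iff_lt_or_eq]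
    constructor
    · rintro (⟨j, hj, rfl⟩ | rfl)
      · exact ⟨j, Or.inl hj, rfl⟩
      · exact ⟨n, Or.inr rfl, rfl⟩
    · rintro ⟨j, (hj | rfl), rfl⟩
      · exact Or.inl ⟨j, hj, rfl⟩
      · exact Or.inr rfl

lemma steps_mono {p : ℕ × ℕ} {n n' : ℕ} (h : n ≤ n') (hp : p ∈ steps y t n) :
    p ∈ steps y t n' := by
  rw [mem_steps_iff] at hp ⊢
  obtain ⟨j, hj, rfl⟩ := hp
  exact ⟨j, lt_of_lt_of_le hj h, rfl⟩

lemma used_mono {k : ℕ} {n n' : ℕ} (h : n ≤ n') (hk : used (steps y t n) k) :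
    used (steps y t n') k := by
  obtain ⟨p, hp, hpk⟩ := hk
  exact ⟨p, steps_mono y t h hp, hpk⟩

/-- chooser at step j -/
def cj (j : ℕ) : ℕ := chooser (steps y t j)
/-- partner at step j -/
def mj (j : ℕ) : ℕ := partner y t j (steps y t j)

lemma mj_spec (j : ℕ) : PartnerP y t j (steps y t j) (mj y t j) := partner_spec y t j _

lemma mj_ne_cj (j : ℕ) : mj y t j ≠ cj y t j := (mj_spec y t j).1.2

lemma mj_unused (j : ℕ) : ¬ used (steps y t j) (mj y t j) := (mj_spec y t j).1.1

lemma cj_unused (j : ℕ) : ¬ used (steps y t j) (cj y t j) := chooser_unused _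

lemma used_steps_succ {k j : ℕ} :
    used (steps y t (j+1)) k ↔ used (steps y t j) k ∨ k = cj y t j ∨ k = mj y t j := by
  constructor
  · rintro ⟨p, hp, hpk⟩
    rcases List.mem_append.mp hp with hp | hp
    · exact Or.inl ⟨p, hp, hpk⟩
    · have : p = stepP y t j (steps y t j) := List.mem_singleton.mp hp
      subst this
      rcases hpk with h | h
      · exact Or.inr (Or.inl h.symm)
      · exact Or.inr (Or.inr h.symm)
  · rintro (⟨p, hp, hpk⟩ | rfl | rfl)
    · exact ⟨p, List.mem_append.mpr (Or.inl hp), hpk⟩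
    · exact ⟨stepP y t j (steps y t j), List.mem_append.mpr (Or.inr (List.mem_singleton.mpr rfl)), Or.inl rfl⟩
    · exact ⟨stepP y t j (steps y t j), List.mem_append.mpr (Or.inr (List.mem_singleton.mpr rfl)), Or.inr rfl⟩

lemma used_of_step {j k : ℕ} (h : k = cj y t j ∨ k = mj y t j) : used (steps y t (j+1)) k :=
  (used_steps_succ y t).mpr (Or.inr h)

lemma step_unique {j j' k : ℕ} (hj : k = cj y t j ∨ k = mj y t j)
    (hj' : k = cj y t j' ∨ k = mj y t j') : j = j' := by
  by_contra hne
  wlog h : j < j' generalizing j j'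
  · exact this hj' hj (Ne.symm hne) (by omega)
  have hused : used (steps y t j') k := used_mono y t (by omega) (used_of_step y t hj)
  have hunused : ¬ used (steps y t j') k := by
    rcases hj' with rfl | rfl
    · exact cj_unused y t j'
    · exact mj_unused y t j'
  exact hunused hused

lemma used_by (k : ℕ) : used (steps y t (k+1)) k := by
  by_contra h
  have hun : ∀ j ≤ k+1, ¬ used (steps y t j) k := fun j hj hu => h (used_mono y t hj hu)
  have h1 : ∀ j ≤ k, cj y t j ≤ k := fun j hj => chooser_min _ (hun j (by omega))
  have h2 : ∀ j ≤ k, cj y t j ≠ k := by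
    intro j hj heq
    exact hun (j+1) (by omega) (used_of_step y t (Or.inl heq.symm))
  have h3 : ∀ j j', j < j' → j' ≤ k → cj y t j ≠ cj y t j' := by
    intro j j' hlt hle heq
    have : used (steps y t j') (cj y t j) := used_mono y t (by omega) (used_of_step y t (Or.inl rfl))
    rw [heq] at this
    exact cj_unused y t j' this
  have hinj : Set.InjOn (cj y t) ↑(Finset.range (k+1)) := by
    intro i hi i' hi' heq
    simp only [Finset.coe_range, Set.mem_Iio] at hi hi'
    by_contra hne
    rcases Nat.lt_or_ge i i' with h | h
    · exact h3 i i' h (by omega) heq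
    · exact h3 i' i (by omega) (by omega) heq.symm
  have hcard : ((Finset.range (k+1)).image (cj y t)).card = k+1 := by
    rw [Finset.card_image_of_injOn hinj, Finset.card_range]
  have hsub : (Finset.range (k+1)).image (cj y t) ⊆ Finset.range k := by
    intro a ha
    obtain ⟨j, hj, rfl⟩ := Finset.mem_image.mp ha
    rw [Finset.mem_range] at hj ⊢
    have := h1 j (by omega)
    have := h2 j (by omega)
    omega
  have := Finset.card_le_card hsub
  rw [hcard, Finset.card_range] at this
  omega

lemma exists_step (k : ℕ) : ∃ j, k = cj y t j ∨ k = mj y t j := by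
  have := used_by y t k
  obtain ⟨p, hp, hpk⟩ := this
  rw [mem_steps_iff] at hp
  obtain ⟨j, _, rfl⟩ := hp
  rcases hpk with h | h
  · exact ⟨j, Or.inl h.symm⟩
  · exact ⟨j, Or.inr h.symm⟩

def stepOf (k : ℕ) : ℕ := Classical.choose (exists_step y t k)

lemma stepOf_spec (k : ℕ) : k = cj y t (stepOf y t k) ∨ k = mj y t (stepOf y t k) :=
  Classical.choose_spec (exists_step y t k)

lemma stepOf_eq {j k : ℕ} (h : k = cj y t j ∨ k = mj y t j) : stepOf y t k = j :=
  step_unique y t (stepOf_spec y t k) h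

def sig (k : ℕ) : ℕ :=
  if k = cj y t (stepOf y t k) then mj y t (stepOf y t k) else cj y t (stepOf y t k)

lemma sig_cj (j : ℕ) : sig y t (cj y t j) = mj y t j := by
  have h := stepOf_eq y t (Or.inl (rfl : cj y t j = cj y t j))
  rw [sig, h, if_pos rfl]

lemma sig_mj (j : ℕ) : sig y t (mj y t j) = cj y t j := by
  have h := stepOf_eq y t (Or.inr (rfl : mj y t j = mj y t j))
  rw [sig, h, if_neg (mj_ne_cj y t j)]

lemma sig_ne (k : ℕ) : sig y t k ≠ k := by
  rcases stepOf_spec y t k with h | h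
  · rw [h, sig_cj]
    exact mj_ne_cj y t _
  · rw [h, sig_mj]
    exact fun heq => mj_ne_cj y t _ heq.symm

lemma sig_invol (k : ℕ) : sig y t (sig y t k) = k := by
  rcases stepOf_spec y t k with h | h
  · rw [h, sig_cj, sig_mj]
  · rw [h, sig_mj, sig_cj]


lemma acc_infinite {z : ℝ} {C : Set ℝ} (h : AccPt z (𝓟 C)) {r : ℝ} (hr : 0 < r) :
    {x | x ∈ C ∧ x ≠ z ∧ dist x z < r}.Infinite := by
  rw [accPt_iff_nhds] at h
  by_contra hfin
  rw [Set.not_infinite] at hfin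
  by_cases hne : (hfin.toFinset.image fun x => dist x z).Nonempty
  · set r₂ := min r ((hfin.toFinset.image fun x => dist x z).min' hne) with hr₂def
    have hr₂pos : 0 < r₂ := by
      refine lt_min hr ?_
      rw [Finset.lt_min'_iff]
      intro b hb
      obtain ⟨x, hx, rfl⟩ := Finset.mem_image.mp hb
      rw [Set.Finite.mem_toFinset] at hx
      exact dist_pos.mpr hx.2.1
    obtain ⟨w, ⟨hwU, hwC⟩, hwne⟩ := h (Metric.ball z r₂) (Metric.ball_mem_nhds z hr₂pos)
    rw [Metric.mem_ball] at hwU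
    have hwD : w ∈ {x | x ∈ C ∧ x ≠ z ∧ dist x z < r} :=
      ⟨hwC, hwne, lt_of_lt_of_le hwU (min_le_left _ _)⟩
    have : (hfin.toFinset.image fun x => dist x z).min' hne ≤ dist w z :=
      Finset.min'_le _ _ (Finset.mem_image.mpr ⟨w, (Set.Finite.mem_toFinset _).mpr hwD, rfl⟩)
    have : r₂ ≤ dist w z := le_trans (min_le_right _ _) this
    linarith
  · obtain ⟨w, ⟨hwU, hwC⟩, hwne⟩ := h (Metric.ball z r) (Metric.ball_mem_nhds z hr)
    rw [Metric.mem_ball] at hwU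
    have hwD : w ∈ {x | x ∈ C ∧ x ≠ z ∧ dist x z < r} := ⟨hwC, hwne, hwU⟩
    exact hne ⟨dist w z, Finset.mem_image.mpr ⟨w, (Set.Finite.mem_toFinset _).mpr hwD, rfl⟩⟩

lemma Tset_finite (j : ℕ) : (Tset t j).Finite := (Set.finite_Iic j).image t

lemma Tset_nonempty (j : ℕ) : (Tset t j).Nonempty := ⟨t 0, 0, Set.mem_Iic.mpr (Nat.zero_le j), rfl⟩

lemma Tset_mono {j j' : ℕ} (h : j ≤ j') : Tset t j ⊆ Tset t j' := by
  rintro x ⟨i, hi, rfl⟩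
  exact ⟨i, Set.mem_Iic.mpr (le_trans (Set.mem_Iic.mp hi) h), rfl⟩

lemma uD_nonneg (j : ℕ) (x : ℝ) : 0 ≤ uD t j x := infDist_nonneg

lemma uD_anti {j j' : ℕ} (h : j ≤ j') (x : ℝ) : uD t j' x ≤ uD t j x :=
  infDist_le_infDist_of_subset (Tset_mono t h) (Tset_nonempty t j)

lemma uD_le_dist {j : ℕ} {x s : ℝ} (hs : s ∈ Tset t j) : uD t j x ≤ dist x s :=
  infDist_le_dist_of_mem hs

lemma ball_nonempty (hacc : ∀ i, AccPt (t i) (𝓟 (Set.range y))) (j : ℕ)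
    (L : List (ℕ × ℕ)) : (BallSet y t j L).Nonempty := by
  set a := y (chooser L)
  obtain ⟨z, hzT, hzd⟩ := (Tset_finite t j).isCompact.exists_infDist_eq_dist (Tset_nonempty t j) a
  obtain ⟨l, _, rfl⟩ := hzT
  have hS : {x | x ∈ Set.range y ∧ x ≠ t l ∧ dist x (t l) < (1/2:ℝ)^j}.Infinite :=
    acc_infinite (hacc l) (by positivity)
  have hSsub : {x | x ∈ Set.range y ∧ x ≠ t l ∧ dist x (t l) < (1/2:ℝ)^j} ⊆ Set.range y :=
    fun x hx => hx.1
  have hpre : (y ⁻¹' {x | x ∈ Set.range y ∧ x ≠ t l ∧ dist x (t l) < (1/2:ℝ)^j}).Infinite :=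
    hS.preimage hSsub
  have hbig : ((y ⁻¹' {x | x ∈ Set.range y ∧ x ≠ t l ∧ dist x (t l) < (1/2:ℝ)^j}) \
      ({k | used L k} ∪ {chooser L})).Infinite :=
    hpre.diff ((used_finite L).union (finite_singleton _))
  obtain ⟨m, hm⟩ := hbig.nonempty
  obtain ⟨⟨_, _, hmd⟩, hm2⟩ := hm
  rw [Set.mem_union, not_or] at hm2
  refine ⟨m, ⟨⟨hm2.1, fun h => hm2.2 (by rw [h]; rfl)⟩, ?_⟩⟩
  have h1 : dist (y m) a ≤ dist (y m) (t l) + dist (t l) a := dist_triangle _ _ _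
  have h2 : dist (t l) a = uD t j a := by rw [dist_comm, ← hzd]; rfl
  have h3 : 0 ≤ uD t j a := uD_nonneg t j a
  rw [radius]
  rw [h2] at h1
  have : dist (y m) (t l) < (1/2:ℝ)^j := hmd
  linarith


lemma star_finite (hacc : ∀ i, AccPt (t i) (𝓟 (Set.range y)))
    {t₀ : ℝ} (ht₀ : t₀ ∈ Set.range t) {ε : ℝ} (hε : 0 < ε) (hε1 : ε ≤ 1) :
    {k : ℕ | y k ≠ t₀ ∧ dist (y k) t₀ ≤ ε/100 ∧ ε ≤ dist (y (sig y t k)) (y k)}.Finite := by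
  by_contra hinf
  have hinf' : {k : ℕ | y k ≠ t₀ ∧ dist (y k) t₀ ≤ ε/100 ∧ ε ≤ dist (y (sig y t k)) (y k)}.Infinite := hinf
  set Bad := {k : ℕ | y k ≠ t₀ ∧ dist (y k) t₀ ≤ ε/100 ∧ ε ≤ dist (y (sig y t k)) (y k)} with hBadDef
  obtain ⟨i₀, hi₀⟩ := ht₀
  have fib : ∀ j : ℕ, {k | k ∈ Bad ∧ stepOf y t k = j}.Finite := by
    intro j
    apply Set.Finite.subset ((Set.finite_singleton (mj y t j)).insert (cj y t j))
    rintro k ⟨_, hstep⟩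
    rcases stepOf_spec y t k with h | h
    · rw [hstep] at h; exact Set.mem_insert_iff.mpr (Or.inl h)
    · rw [hstep] at h; exact Set.mem_insert_iff.mpr (Or.inr (by rw [h]; rfl))
  have himg : (stepOf y t '' Bad).Infinite := by
    intro hfin
    apply hinf
    have hsub : Bad ⊆ ⋃ j ∈ stepOf y t '' Bad, {k | k ∈ Bad ∧ stepOf y t k = j} := by
      intro k hk
      exact Set.mem_biUnion (Set.mem_image_of_mem _ hk) ⟨hk, rfl⟩
    exact (hfin.biUnion (fun j _ => fib j)).subset hsub
  obtain ⟨N, hN⟩ := exists_pow_lt_of_lt_one (show (0:ℝ) < ε/100 by positivity)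
    (show (1/2:ℝ) < 1 by norm_num)
  set J₀ := max (i₀+1) (max N 1) with hJ₀
  set GS := (stepOf y t '' Bad) ∩ {j | J₀ ≤ j} with hGSdef
  have hGS : GS.Infinite := by
    have heq : GS = (stepOf y t '' Bad) \ (Set.Iio J₀) := by
      ext j
      simp only [hGSdef, Set.mem_inter_iff, Set.mem_setOf_eq, Set.mem_diff, Set.mem_Iio, not_lt]
    rw [heq]
    exact himg.diff (Set.finite_Iio J₀)
  have hpow : ∀ j ∈ GS, ((1:ℝ)/2)^j ≤ ε/100 := by
    intro j hj
    have hNj : N ≤ j := le_trans (le_trans (le_max_left N 1) (le_max_right _ _)) hj.2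
    exact le_trans (pow_le_pow_of_le_one (by norm_num) (by norm_num) hNj) (le_of_lt hN)
  have hj1 : ∀ j ∈ GS, 1 ≤ j := fun j hj =>
    le_trans (le_trans (le_max_right N 1) (le_max_right _ _)) hj.2
  have ht₀mem : ∀ j ∈ GS, t₀ ∈ Tset t j := by
    intro j hj
    exact ⟨i₀, Set.mem_Iic.mpr (by have := le_trans (le_max_left (i₀+1) (max N 1)) hj.2; omega), hi₀⟩
  have hspan : ∀ j ∈ GS, ε ≤ dist (y (mj y t j)) (y (cj y t j)) := by
    intro j hj
    obtain ⟨k, hkBad, hkj⟩ := hj.1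
    have hk3 := hkBad.2.2
    rcases stepOf_spec y t k with h | h
    · rw [hkj] at h
      rw [h, sig_cj] at hk3
      exact hk3
    · rw [hkj] at h
      rw [h, sig_mj] at hk3
      rw [dist_comm] at hk3
      exact hk3
  have hULB : ∀ j ∈ GS, ε/6 ≤ uD t j (y (cj y t j)) := by
    intro j hj
    by_cases hoc : OC y t j (steps y t j)
    · have h1 : 1 ≤ uD t j (y (cj y t j)) := hoc.1
      linarith
    · have hb := ball_nonempty y t hacc j (steps y t j)
      have hsp := (mj_spec y t j).2
      rw [if_neg hoc] at hsp
      obtain ⟨hmem, _⟩ := hsp hb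
      have hr : dist (y (mj y t j)) (y (cj y t j)) ≤
          (1/2:ℝ)^j + 5 * uD t j (y (cj y t j)) := hmem.2
      have h1 := hspan j hj
      have h2 := hpow j hj
      linarith
  have hbadm : ∀ j ∈ GS, dist (y (mj y t j)) t₀ ≤ ε/100 := by
    intro j hj
    obtain ⟨k, hkBad, hkj⟩ := hj.1
    rcases stepOf_spec y t k with h | h
    · rw [hkj] at h
      exfalso
      have h1 : uD t j (y (cj y t j)) ≤ dist (y (cj y t j)) t₀ := uD_le_dist t (ht₀mem j hj)
      rw [← h] at h1
      have h2 := hkBad.2.1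
      have h3 := hULB j hj
      rw [← h] at h3
      linarith
    · rw [hkj] at h
      rw [← h]
      exact hkBad.2.1
  have hsDm : ∀ j ∈ GS, sD t j (y (mj y t j)) ≤ ε/100 := by
    intro j hj
    exact le_trans (min_le_left _ _) (le_trans (uD_le_dist t (ht₀mem j hj)) (hbadm j hj))
  have hUSet' : ∀ j ∈ GS, ∀ j' ∈ GS, j < j' → cj y t j' ∈ USet (steps y t j) := by
    intro j hj j' hj' hlt
    constructor
    · exact fun hu => cj_unused y t j' (used_mono y t (le_of_lt hlt) hu)
    · intro heq
      apply cj_unused y t j'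
      rw [heq]
      exact used_mono y t (by omega) (used_of_step y t (Or.inl rfl))
  have hsdc' : ∀ j ∈ GS, ∀ j' ∈ GS, j < j' → ε/6 ≤ sD t j (y (cj y t j')) := by
    intro j hj j' hj' hlt
    refine le_min ?_ ?_
    · exact le_trans (hULB j' hj') (uD_anti t (le_of_lt hlt) _)
    · have h1 : (1:ℝ) ≤ (j:ℝ) := by exact_mod_cast hj1 j hj
      linarith
  have hNoOC : ∀ j ∈ GS, ¬ OC y t j (steps y t j) := by
    intro j hj hoc
    obtain ⟨j', hj', hlt⟩ := hGS.exists_gt j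
    have hU := hUSet' j hj j' hj' hlt
    have hle : sD t j (y (cj y t j')) ≤ gam y t j (steps y t j) :=
      le_csSup (bddAbove_sD y t j _) (Set.mem_image_of_mem _ hU)
    have h3 := hsdc' j hj j' hj' hlt
    have hsp := (mj_spec y t j).2
    rw [if_pos hoc] at hsp
    have h4 := hsDm j hj
    linarith
  have hBall : ∀ j ∈ GS,
      mj y t j ∈ BallSet y t j (steps y t j) ∧
      bet y t j (steps y t j) ≤ ε/50 ∧
      uD t j (y (cj y t j)) ≤ 2 ∧ dist (y (cj y t j)) t₀ ≤ 11 := by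
    intro j hj
    have hoc := hNoOC j hj
    have hb := ball_nonempty y t hacc j (steps y t j)
    have hsp := (mj_spec y t j).2
    rw [if_neg hoc] at hsp
    obtain ⟨hmem, hbet2⟩ := hsp hb
    have hbet : bet y t j (steps y t j) ≤ ε/50 := by
      have := hsDm j hj
      linarith
    have hu2 : uD t j (y (cj y t j)) ≤ 2 := by
      rw [OC, not_and_or] at hoc
      rcases hoc with h | h
      · push_neg at h
        have h' : uD t j (y (cj y t j)) < 1 := h
        linarith
      · push_neg at h
        obtain ⟨m'', hm''B, hm''⟩ := h
        have hm''2 : uD t j (y (cj y t j)) / 100 < sD t j (y m'') := hm''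
        have hle : sD t j (y m'') ≤ bet y t j (steps y t j) :=
          le_csSup (bddAbove_sD y t j _) (Set.mem_image_of_mem _ hm''B)
        linarith
    have hd11 : dist (y (cj y t j)) t₀ ≤ 11 := by
      have htri : dist (y (cj y t j)) t₀ ≤
          dist (y (cj y t j)) (y (mj y t j)) + dist (y (mj y t j)) t₀ := dist_triangle _ _ _
      have hr : dist (y (mj y t j)) (y (cj y t j)) ≤
          (1/2:ℝ)^j + 5 * uD t j (y (cj y t j)) := hmem.2
      rw [dist_comm (y (cj y t j)) (y (mj y t j))] at htri
      have := hpow j hj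
      have := hbadm j hj
      linarith
    exact ⟨hmem, hbet, hu2, hd11⟩
  have hfinal : ∀ j ∈ GS, ∀ j' ∈ GS, j < j' → |y (cj y t j') - y (cj y t j)| < ε/2 → False := by
    intro j hj j' hj' hlt hclose
    have hU := hUSet' j hj j' hj' hlt
    have hmemB : cj y t j' ∈ BallSet y t j (steps y t j) := by
      refine ⟨hU, ?_⟩
      show dist (y (cj y t j')) (y (cj y t j)) ≤ (1/2:ℝ)^j + 5 * uD t j (y (cj y t j))
      rw [Real.dist_eq]
      have h1 := hULB j hj
      have h2 : (0:ℝ) ≤ (1/2:ℝ)^j := by positivity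
      linarith
    have h1 : sD t j (y (cj y t j')) ≤ bet y t j (steps y t j) :=
      le_csSup (bddAbove_sD y t j _) (Set.mem_image_of_mem _ hmemB)
    have h3 := hsdc' j hj j' hj' hlt
    have hbet := (hBall j hj).2.1
    linarith
  have hmaps : Set.MapsTo (fun j => ⌊ y (cj y t j) / (ε/2) ⌋) GS
      (Set.Icc ⌊(t₀-11)/(ε/2)⌋ ⌊(t₀+11)/(ε/2)⌋) := by
    intro j hj
    have hd := (hBall j hj).2.2.2
    rw [Real.dist_eq, abs_le] at hd
    have hε2 : (0:ℝ) < ε/2 := by positivity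
    constructor
    · exact Int.floor_le_floor ((div_le_div_iff_of_pos_right hε2).mpr (by linarith [hd.1]))
    · exact Int.floor_le_floor ((div_le_div_iff_of_pos_right hε2).mpr (by linarith [hd.2]))
  obtain ⟨j, hj, j', hj', hne, heq⟩ := hGS.exists_ne_map_eq_of_mapsTo hmaps (Set.finite_Icc _ _)
  have hfl : ∀ u v : ℝ, ⌊u/(ε/2)⌋ = ⌊v/(ε/2)⌋ → |v - u| < ε/2 := by
    intro u v h
    have hε2 : (0:ℝ) < ε/2 := by positivity
    have h1 := Int.floor_le (u/(ε/2))
    have h2 := Int.lt_floor_add_one (u/(ε/2))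
    have h3 := Int.floor_le (v/(ε/2))
    have h4 := Int.lt_floor_add_one (v/(ε/2))
    rw [h] at h1 h2
    rw [abs_lt]
    constructor
    · have h5 : (u - v)/(ε/2) < 1 := by
        rw [sub_div]
        linarith
      have := (div_lt_one hε2).mp h5
      linarith
    · have h5 : (v - u)/(ε/2) < 1 := by
        rw [sub_div]
        linarith
      exact (div_lt_one hε2).mp h5
  rcases hne.lt_or_gt with hlt | hlt
  · exact hfinal j hj j' hj' hlt (hfl _ _ heq)
  · exact hfinal j' hj' j hj hlt (hfl _ _ heq.symm)


lemma star_delta (hacc : ∀ i, AccPt (t i) (𝓟 (Set.range y)))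
    {t₀ : ℝ} (ht₀ : t₀ ∈ Set.range t) {ε : ℝ} (hε : 0 < ε) :
    ∃ δ > 0, ∀ k : ℕ, y k ≠ t₀ → dist (y k) t₀ < δ → dist (y (sig y t k)) (y k) < ε := by
  set ε' := min ε 1 with hε'def
  have hε' : 0 < ε' := lt_min hε one_pos
  have hε'1 : ε' ≤ 1 := min_le_right _ _
  have hε'ε : ε' ≤ ε := min_le_left _ _
  have hfin := star_finite y t hacc ht₀ hε' hε'1
  set B := hfin.toFinset with hBdef
  by_cases hne : B.Nonempty
  · refine ⟨min (ε'/100) (B.inf' hne fun k => dist (y k) t₀), ?_, ?_⟩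
    · refine lt_min (by positivity) ?_
      rw [Finset.lt_inf'_iff]
      intro k hk
      rw [hBdef, Set.Finite.mem_toFinset] at hk
      exact dist_pos.mpr hk.1
    · intro k hk hdist
      by_contra h
      push_neg at h
      have hkBad : k ∈ B := by
        rw [hBdef, Set.Finite.mem_toFinset]
        exact ⟨hk, le_trans (le_of_lt hdist) (le_trans (min_le_left _ _) (le_refl _)),
          le_trans hε'ε h⟩
      have h1 : B.inf' hne (fun k => dist (y k) t₀) ≤ dist (y k) t₀ :=
        Finset.inf'_le _ hkBad
      have h2 : dist (y k) t₀ < B.inf' hne (fun k => dist (y k) t₀) :=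
        lt_of_lt_of_le hdist (min_le_right _ _)
      linarith
  · refine ⟨ε'/100, by positivity, ?_⟩
    intro k hk hdist
    by_contra h
    push_neg at h
    exact hne ⟨k, by
      rw [hBdef, Set.Finite.mem_toFinset]
      exact ⟨hk, le_of_lt hdist, le_trans hε'ε h⟩⟩

def gfun : ℝ → ℝ := fun x => if x ∈ Set.range y then y (sig y t (invFun y x)) else x

variable {y}

lemma gfun_eq_of_not {x : ℝ} (hx : x ∉ Set.range y) : gfun y t x = x := if_neg hx

lemma gfun_apply (hy : Injective y) (k : ℕ) : gfun y t (y k) = y (sig y t k) := by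
  rw [gfun, if_pos (Set.mem_range_self k), leftInverse_invFun hy k]

lemma gfun_mem {x : ℝ} (hx : x ∈ Set.range y) : gfun y t x ∈ Set.range y := by
  rw [gfun, if_pos hx]
  exact Set.mem_range_self _

lemma gfun_ne (hy : Injective y) {x : ℝ} (hx : x ∈ Set.range y) : gfun y t x ≠ x := by
  obtain ⟨k, rfl⟩ := hx
  rw [gfun_apply t hy k]
  exact fun h => sig_ne y t k (hy h)

lemma gfun_invol (hy : Injective y) (x : ℝ) : gfun y t (gfun y t x) = x := by
  by_cases hx : x ∈ Set.range y
  · obtain ⟨k, rfl⟩ := hx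
    rw [gfun_apply t hy k, gfun_apply t hy (sig y t k), sig_invol]
  · rw [gfun_eq_of_not t hx, gfun_eq_of_not t hx]

variable (y)

theorem core (F T : Set ℝ) (hFc : F.Countable) (hFi : F.Infinite) (hTc : T.Countable)
    (hT : ∀ s ∈ T, AccPt s (𝓟 F)) :
    ∃ g : ℝ → ℝ, (∀ x, x ∉ F → g x = x) ∧ (∀ x ∈ F, g x ∈ F ∧ g x ≠ x) ∧ (∀ x, g (g x) = x) ∧
      ∀ s ∈ T, ∀ ε, 0 < ε → ∃ δ > 0, ∀ x ∈ F, x ≠ s → dist x s < δ → dist (g x) x < ε := by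
  haveI := hFc.to_subtype
  haveI := hFi.to_subtype
  obtain ⟨d⟩ : Nonempty (Denumerable ↥F) :=
    nonempty_denumerable_iff.mpr ⟨inferInstance, inferInstance⟩
  letI := d
  let e : ℕ ≃ ↥F := (Denumerable.eqv ↥F).symm
  set y' : ℕ → ℝ := fun n => ((e n : ↥F) : ℝ) with hy'def
  have hyinj : Injective y' := fun a b h => e.injective (Subtype.val_injective h)
  have hyr : Set.range y' = F := by
    ext x
    constructor
    · rintro ⟨n, rfl⟩
      exact (e n).2
    · intro hx
      exact ⟨e.symm ⟨x, hx⟩, by simp [hy'def]⟩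
  rcases T.eq_empty_or_nonempty with rfl | hTne
  · refine ⟨gfun y' (fun _ => 0), ?_, ?_, gfun_invol _ hyinj, by simp⟩
    · intro x hx
      exact gfun_eq_of_not _ (by rwa [hyr])
    · intro x hx
      rw [← hyr] at hx
      exact ⟨by rw [← hyr]; exact gfun_mem _ hx, gfun_ne _ hyinj hx⟩
  · obtain ⟨t, htr⟩ := hTc.exists_eq_range hTne
    have hacc : ∀ i, AccPt (t i) (𝓟 (Set.range y')) := fun i => by
      rw [hyr]
      exact hT _ (htr ▸ Set.mem_range_self i)
    refine ⟨gfun y' t, ?_, ?_, gfun_invol _ hyinj, ?_⟩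
    · intro x hx
      exact gfun_eq_of_not _ (by rwa [hyr])
    · intro x hx
      rw [← hyr] at hx
      exact ⟨by rw [← hyr]; exact gfun_mem _ hx, gfun_ne _ hyinj hx⟩
    · intro s hs ε hε
      obtain ⟨δ, hδ, hδ'⟩ := star_delta y' t hacc (htr ▸ hs) hε
      refine ⟨δ, hδ, ?_⟩
      intro x hx hxs hxd
      rw [← hyr] at hx
      obtain ⟨k, rfl⟩ := hx
      rw [gfun_apply t hyinj k]
      exact hδ' k hxs hxd


lemma accPt_union {p : ℝ} {A B : Set ℝ} (h : AccPt p (𝓟 (A ∪ B))) :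
    AccPt p (𝓟 A) ∨ AccPt p (𝓟 B) := by
  rw [← Filter.sup_principal] at h
  have h' : Filter.NeBot ((𝓝[≠] p ⊓ 𝓟 A) ⊔ (𝓝[≠] p ⊓ 𝓟 B)) := by
    rwa [← inf_sup_left]
  exact (Filter.sup_neBot.mp h').imp (fun h => h) (fun h => h)

end
end Stmt0Proof


open Filter Topology in
theorem stmt_0 (Q F : Set ℝ)
    (hQ : Q ⊆ Set.range ((↑) : ℚ → ℝ)) (hF : F ⊆ Set.range ((↑) : ℚ → ℝ))
    (hdisj : Disjoint Q F) (hinf : F.Infinite)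
    (hni : ∀ x ∈ F, AccPt x (Filter.principal (Q ∪ F))) :
    ∃ f : ↥(Q ∪ F) → ↥(Q ∪ F), Function.Bijective f ∧
      (∀ x : ↥(Q ∪ F), (x : ℝ) ∈ Q → f x = x) ∧
      (∀ x : ↥(Q ∪ F), (x : ℝ) ∈ F → f x ≠ x ∧ f (f x) = x) ∧
      {x : ↥(Q ∪ F) | ContinuousAt f x} = {x : ↥(Q ∪ F) | (x : ℝ) ∈ Q} := by
  classical
  have hFc : F.Countable := (Set.countable_range _).mono hF
  have hSc : (Q ∪ F).Countable := ((Set.countable_range ((↑) : ℚ → ℝ)).mono hQ).union hFc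
  set T := {x : ℝ | x ∈ Q ∪ F ∧ AccPt x (Filter.principal F)} with hTdef
  have hTc : T.Countable := hSc.mono (fun x hx => hx.1)
  obtain ⟨g, hg1, hg2, hg3, hg4⟩ := Stmt0Proof.core F T hFc hinf hTc (fun s hs => hs.2)
  have hmem : ∀ x : ↥(Q ∪ F), g x.1 ∈ Q ∪ F := by
    intro x
    by_cases hx : (x : ℝ) ∈ F
    · exact Or.inr (hg2 _ hx).1
    · rw [hg1 _ hx]; exact x.2
  set f : ↥(Q ∪ F) → ↥(Q ∪ F) := fun x => ⟨g x.1, hmem x⟩ with hfdef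
  have hinv : ∀ x, f (f x) = x := fun x => Subtype.ext (hg3 x.1)
  have hQnotF : ∀ {x : ℝ}, x ∈ Q → x ∉ F := fun hx => Set.disjoint_left.mp hdisj hx
  have hfQ : ∀ x : ↥(Q ∪ F), (x : ℝ) ∈ Q → f x = x := fun x hx =>
    Subtype.ext (hg1 _ (hQnotF hx))
  have hcont : ∀ x : ↥(Q ∪ F), (x : ℝ) ∈ Q → ContinuousAt f x := by
    intro q hq
    rw [Metric.continuousAt_iff]
    intro ε hε
    have hfq : f q = q := hfQ q hq
    by_cases hacc : AccPt (q : ℝ) (𝓟 F)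
    · obtain ⟨δ₀, hδ₀, h₀⟩ := hg4 q ⟨q.2, hacc⟩ (ε/2) (by positivity)
      refine ⟨min δ₀ (ε/2), by positivity, ?_⟩
      intro x hx
      rw [Subtype.dist_eq] at hx ⊢
      rw [hfq]
      show dist (g x.1) (q : ℝ) < ε
      by_cases hxF : (x : ℝ) ∈ F
      · have hne : (x : ℝ) ≠ (q : ℝ) := fun h => hQnotF hq (h ▸ hxF)
        have h2 := h₀ x.1 hxF hne (lt_of_lt_of_le hx (min_le_left _ _))
        calc dist (g x.1) (q : ℝ) ≤ dist (g x.1) x.1 + dist x.1 (q : ℝ) := dist_triangle _ _ _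
        _ < ε/2 + ε/2 := add_lt_add h2 (lt_of_lt_of_le hx (min_le_right _ _))
        _ = ε := by ring
      · rw [hg1 _ hxF]
        exact lt_of_lt_of_le hx (le_trans (min_le_right _ _) (by linarith))
    · rw [accPt_iff_nhds] at hacc
      push_neg at hacc
      obtain ⟨U, hU, hU2⟩ := hacc
      obtain ⟨δ₂, hδ₂, hball⟩ := Metric.mem_nhds_iff.mp hU
      refine ⟨min δ₂ ε, by positivity, ?_⟩
      intro x hx
      rw [Subtype.dist_eq] at hx ⊢
      rw [hfq]
      show dist (g x.1) (q : ℝ) < ε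
      have hxF : (x : ℝ) ∉ F := by
        intro hxF
        have hU3 : (x : ℝ) ∈ U := hball (Metric.mem_ball.mpr (lt_of_lt_of_le hx (min_le_left _ _)))
        have := hU2 x.1 ⟨hU3, hxF⟩
        exact hQnotF hq (this ▸ hxF)
      rw [hg1 _ hxF]
      exact lt_of_lt_of_le hx (min_le_right _ _)
  have hdisc : ∀ x : ↥(Q ∪ F), (x : ℝ) ∈ F → ¬ ContinuousAt f x := by
    intro p hp hc
    rw [Metric.continuousAt_iff] at hc
    have hgp := hg2 p.1 hp
    set η := dist (g p.1) p.1 with hηdef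
    have hη : 0 < η := dist_pos.mpr hgp.2
    obtain ⟨δ, hδ, hδ'⟩ := hc (η/2) (by positivity)
    by_cases hq : AccPt (p : ℝ) (𝓟 Q)
    · rw [accPt_iff_nhds] at hq
      obtain ⟨w, ⟨hwU, hwQ⟩, hwne⟩ := hq (Metric.ball p.1 (min δ (η/2)))
        (Metric.ball_mem_nhds _ (by positivity))
      rw [Metric.mem_ball] at hwU
      have hwS : w ∈ Q ∪ F := Or.inl hwQ
      have h1 := hδ' (x := ⟨w, hwS⟩)
        (by rw [Subtype.dist_eq]; exact lt_of_lt_of_le hwU (min_le_left _ _))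
      rw [Subtype.dist_eq] at h1
      have hfw : g w = w := hg1 w (hQnotF hwQ)
      have h1' : dist w (g p.1) < η/2 := by
        rw [show ((f ⟨w, hwS⟩ : ↥(Q ∪ F)) : ℝ) = g w from rfl, hfw] at h1
        exact h1
      have htri : η ≤ dist (g p.1) w + dist w p.1 := dist_triangle _ _ _
      have hwp : dist w p.1 < η/2 := lt_of_lt_of_le hwU (min_le_right _ _)
      rw [dist_comm (g p.1) w] at htri
      linarith
    · have hacc : AccPt (p : ℝ) (𝓟 F) := by
        rcases Stmt0Proof.accPt_union (hni p.1 hp) with h | h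
        · exact absurd h hq
        · exact h
      obtain ⟨δ₀, hδ₀, h₀⟩ := hg4 p ⟨p.2, hacc⟩ (η/4) (by positivity)
      rw [accPt_iff_nhds] at hacc
      obtain ⟨w, ⟨hwU, hwF⟩, hwne⟩ := hacc (Metric.ball p.1 (min δ (min δ₀ (η/4))))
        (Metric.ball_mem_nhds _ (by positivity))
      rw [Metric.mem_ball] at hwU
      have hwS : w ∈ Q ∪ F := Or.inr hwF
      have h1 := hδ' (x := ⟨w, hwS⟩)
        (by rw [Subtype.dist_eq]; exact lt_of_lt_of_le hwU (min_le_left _ _))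
      rw [Subtype.dist_eq] at h1
      have h1' : dist (g w) (g p.1) < η/2 := h1
      have h2 : dist (g w) w < η/4 :=
        h₀ w hwF hwne (lt_of_lt_of_le hwU (le_trans (min_le_right _ _) (min_le_left _ _)))
      have h3 : dist w p.1 < η/4 :=
        lt_of_lt_of_le hwU (le_trans (min_le_right _ _) (min_le_right _ _))
      have htri : dist (g p.1) p.1 ≤ dist (g p.1) (g w) + (dist (g w) w + dist w p.1) := by
        calc dist (g p.1) p.1 ≤ dist (g p.1) (g w) + dist (g w) p.1 := dist_triangle _ _ _
        _ ≤ dist (g p.1) (g w) + (dist (g w) w + dist w p.1) := by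
            linarith [dist_triangle (g w) w p.1]
      rw [dist_comm (g p.1) (g w)] at htri
      linarith
  refine ⟨f, ?_, hfQ, ?_, ?_⟩
  · exact Function.Involutive.bijective hinv
  · intro x hx
    refine ⟨fun h => (hg2 x.1 hx).2 (congrArg Subtype.val h), Subtype.ext (hg3 x.1)⟩
  · ext x
    simp only [Set.mem_setOf_eq]
    constructor
    · intro hcx
      by_contra hxQ
      rcases x.2 with h | h
      · exact hxQ h
      · exact hdisc x h hcx
    · exact hcont x
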